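/- Every symmetric Leibniz algebra is flexible, i.e. satisfies (xy)x = x(yx) for all x,y. -/
import Mathlib

/-- Every symmetric Leibniz algebra is flexible: `(xy)x = x(yx)`. -/
theorem stmt_5 {A : Type*} [NonUnitalNonAssocRing A]
    (hL : ∀ x y z : A, x * (y * z) = (x * y) * z + y * (x * z))
    (hR : ∀ x y z : A, (x * y) * z = (x * z) * y + x * (y * z)) :
    ∀ x y : A, (x * y) * x = x * (y * x) := by
  intro x y
  have hsq : (x * x) * y = 0 := by
    have h := hL x x y
    nth_rewrite 1 [← zero_add (x*(x*y))] at h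
    exact (add_right_cancel h).symm
  have h2 := hR x y x
  rw [hsq] at h2
  simpa using h2
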